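/- For any red–blue pair of pegs in any solution, the total weight contribution of all their crossings other than the first is zero: after the first crossing, the remaining crossings of the pair come in equal numbers of +2 and −2 weight-change jumps. -/

import Mathlib

open scoped Classical

/-- A peg of the puzzle: `Sum.inl i` is the `i`-th blue peg, `Sum.inr i` is
the `i`-th red peg. -/
abbrev Peg (N : ℕ) := Fin N ⊕ Fin N

/-- A solution of the `N`-peg puzzle using `L` moves, recorded by the
position (a hole, numbered `1,…,2N+1`) of each peg at each time `0,…,L`.
Initially the blue pegs occupy holes `1,…,N` and the red pegs holes
`N+2,…,2N+1`; at the end the red pegs occupy the leftmost `N` holes and the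
blue pegs the rightmost `N` holes.  On each move exactly one peg moves, by
`±1` into the adjacent empty hole (a step), or by `±2` over one adjacent peg
into the empty hole (a jump). -/
structure PegSolution (N L : ℕ) where
  pos : ℕ → Peg N → ℤ
  mem_range : ∀ t ≤ L, ∀ p, 1 ≤ pos t p ∧ pos t p ≤ 2 * N + 1
  inj : ∀ t ≤ L, ∀ p q, pos t p = pos t q → p = q
  init_blue : ∀ i : Fin N, pos 0 (Sum.inl i) = (i : ℤ) + 1
  init_red : ∀ i : Fin N, pos 0 (Sum.inr i) = (N : ℤ) + 2 + (i : ℤ)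
  final_blue : ∀ i : Fin N, (N : ℤ) + 2 ≤ pos L (Sum.inl i)
  final_red : ∀ i : Fin N, pos L (Sum.inr i) ≤ (N : ℤ)
  move : ∀ t < L, ∃ mover : Peg N,
    (∀ q, q ≠ mover → pos (t + 1) q = pos t q) ∧
    ((pos (t + 1) mover - pos t mover = 1 ∨ pos (t + 1) mover - pos t mover = -1) ∨
     ((pos (t + 1) mover - pos t mover = 2 ∨ pos (t + 1) mover - pos t mover = -2) ∧
      ∃ mid : Peg N, mid ≠ mover ∧ 2 * pos t mid = pos t mover + pos (t + 1) mover))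

/-- The pair consisting of the blue peg `i` and the red peg `j` crosses on
move `t` (one jumps over the other): their relative order changes between
times `t` and `t + 1`. -/
def CrossesAt {N L : ℕ} (s : PegSolution N L) (i j : Fin N) (t : ℕ) : Prop :=
  (s.pos t (Sum.inl i) - s.pos t (Sum.inr j)) *
    (s.pos (t + 1) (Sum.inl i) - s.pos (t + 1) (Sum.inr j)) < 0

/-- The weight of the position at time `t`: total distance moved right by the
blue pegs plus total distance moved left by the red pegs. -/
def weight {N L : ℕ} (s : PegSolution N L) (t : ℕ) : ℤ :=
  (∑ i : Fin N, (s.pos t (Sum.inl i) - s.pos 0 (Sum.inl i))) +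
  ∑ i : Fin N, (s.pos 0 (Sum.inr i) - s.pos t (Sum.inr i))

/-- Move `t` is a first cross: some red–blue pair crosses on move `t` for the
first time. -/
def IsFirstCross {N L : ℕ} (s : PegSolution N L) (t : ℕ) : Prop :=
  ∃ i j : Fin N, CrossesAt s i j t ∧ ∀ u < t, ¬ CrossesAt s i j u

namespace LaterCross

variable {N L : ℕ}

/-- The signed gap of the pair. -/
def dd (s : PegSolution N L) (i j : Fin N) (t : ℕ) : ℤ :=
  s.pos t (Sum.inl i) - s.pos t (Sum.inr j)

/-- The sign of the gap. -/
def ee (s : PegSolution N L) (i j : Fin N) (t : ℕ) : ℤ :=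
  if 0 < dd s i j t then 1 else -1

lemma dd_ne (s : PegSolution N L) (i j : Fin N) {t : ℕ} (ht : t ≤ L) :
    dd s i j t ≠ 0 := by
  intro h0
  have h1 : s.pos t (Sum.inl i) = s.pos t (Sum.inr j) := by
    have : s.pos t (Sum.inl i) - s.pos t (Sum.inr j) = 0 := h0
    linarith
  exact absurd (s.inj t ht _ _ h1) (by simp)

lemma weight_expand (s : PegSolution N L) (t : ℕ) :
    weight s (t + 1) - weight s t =
      (∑ k : Fin N, (s.pos (t + 1) (Sum.inl k) - s.pos t (Sum.inl k))) +
      (∑ k : Fin N, (s.pos t (Sum.inr k) - s.pos (t + 1) (Sum.inr k))) := by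
  unfold weight
  rw [Finset.sum_sub_distrib, Finset.sum_sub_distrib, Finset.sum_sub_distrib,
    Finset.sum_sub_distrib, Finset.sum_sub_distrib, Finset.sum_sub_distrib]
  ring

lemma cross_main (s : PegSolution N L) (i j : Fin N) {t : ℕ} (ht : t < L)
    (hc : CrossesAt s i j t) :
    (dd s i j t < 0 ∧ 0 < dd s i j (t + 1) ∧ weight s (t + 1) - weight s t = 2) ∨
    (0 < dd s i j t ∧ dd s i j (t + 1) < 0 ∧ weight s (t + 1) - weight s t = -2) := by
  have hc' : dd s i j t * dd s i j (t + 1) < 0 := hc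
  obtain ⟨mover, hfix, hmov⟩ := s.move t ht
  have hsigns : (0 < dd s i j t ∧ dd s i j (t + 1) < 0) ∨
      (dd s i j t < 0 ∧ 0 < dd s i j (t + 1)) := mul_neg_iff.mp hc'
  have hij : mover = Sum.inl i ∨ mover = Sum.inr j := by
    by_contra hm
    push_neg at hm
    have h1 := hfix (Sum.inl i) (Ne.symm hm.1)
    have h2 := hfix (Sum.inr j) (Ne.symm hm.2)
    have heq : dd s i j (t + 1) = dd s i j t := by
      unfold dd; rw [h1, h2]
    rw [heq] at hc'
    nlinarith [mul_self_nonneg (dd s i j t)]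
  rcases hij with hmv | hmv
  · subst hmv
    set Δ := s.pos (t + 1) (Sum.inl i) - s.pos t (Sum.inl i) with hΔ
    have hΔr : Δ = 1 ∨ Δ = -1 ∨ Δ = 2 ∨ Δ = -2 := by
      rcases hmov with (h | h) | ⟨(h | h), _⟩ <;> tauto
    have hjfix : s.pos (t + 1) (Sum.inr j) = s.pos t (Sum.inr j) :=
      hfix _ (by simp)
    have hdd : dd s i j (t + 1) - dd s i j t = Δ := by
      unfold dd; rw [hjfix]; ring
    have hblue : (∑ k : Fin N, (s.pos (t + 1) (Sum.inl k) - s.pos t (Sum.inl k))) = Δ := by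
      rw [Finset.sum_eq_single_of_mem i (Finset.mem_univ i)
        (fun b _ hb => by rw [hfix (Sum.inl b) (by simp [hb])]; ring)]
    have hred : (∑ k : Fin N, (s.pos t (Sum.inr k) - s.pos (t + 1) (Sum.inr k))) = 0 := by
      apply Finset.sum_eq_zero
      intro k _
      rw [hfix (Sum.inr k) (by simp)]; ring
    have hw : weight s (t + 1) - weight s t = Δ := by
      rw [weight_expand, hblue, hred]; ring
    rw [hw]
    clear hc hc' hmov hfix hblue hred hw
    omega
  · subst hmv
    set Δ := s.pos (t + 1) (Sum.inr j) - s.pos t (Sum.inr j) with hΔ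
    have hΔr : Δ = 1 ∨ Δ = -1 ∨ Δ = 2 ∨ Δ = -2 := by
      rcases hmov with (h | h) | ⟨(h | h), _⟩ <;> tauto
    have hifix : s.pos (t + 1) (Sum.inl i) = s.pos t (Sum.inl i) :=
      hfix _ (by simp)
    have hdd : dd s i j (t + 1) - dd s i j t = -Δ := by
      unfold dd; rw [hifix]; ring
    have hblue : (∑ k : Fin N, (s.pos (t + 1) (Sum.inl k) - s.pos t (Sum.inl k))) = 0 := by
      apply Finset.sum_eq_zero
      intro k _
      rw [hfix (Sum.inl k) (by simp)]; ring
    have hred : (∑ k : Fin N, (s.pos t (Sum.inr k) - s.pos (t + 1) (Sum.inr k))) = -Δ := by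
      rw [Finset.sum_eq_single_of_mem j (Finset.mem_univ j)
        (fun b _ hb => by rw [hfix (Sum.inr b) (by simp [hb])]; ring)]
      rw [hΔ]; ring
    have hw : weight s (t + 1) - weight s t = -Δ := by
      rw [weight_expand, hblue, hred]; ring
    rw [hw]
    clear hc hc' hmov hfix hblue hred hw
    omega

lemma noncross_step (s : PegSolution N L) (i j : Fin N) {t : ℕ} (ht : t < L)
    (hc : ¬ CrossesAt s i j t) : ee s i j (t + 1) = ee s i j t := by
  have h1 : dd s i j t ≠ 0 := dd_ne s i j (le_of_lt ht)
  have h2 : dd s i j (t + 1) ≠ 0 := dd_ne s i j (by omega)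
  have hc' : ¬ dd s i j t * dd s i j (t + 1) < 0 := hc
  unfold ee
  by_cases hp : 0 < dd s i j t
  · have hp2 : 0 < dd s i j (t + 1) := by
      by_contra hno
      have h' : dd s i j (t + 1) < 0 := (not_lt.mp hno).lt_of_ne h2
      exact hc' (mul_neg_of_pos_of_neg hp h')
    simp [hp, hp2]
  · have hn : dd s i j t < 0 := (not_lt.mp hp).lt_of_ne h1
    have hp2 : ¬ 0 < dd s i j (t + 1) := by
      intro hyes
      exact hc' (mul_neg_of_neg_of_pos hn hyes)
    simp [hp, hp2]

lemma step (s : PegSolution N L) (i j : Fin N) {t : ℕ} (ht : t < L) :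
    (if CrossesAt s i j t then weight s (t + 1) - weight s t else 0) =
      ee s i j (t + 1) - ee s i j t := by
  by_cases hc : CrossesAt s i j t
  · rw [if_pos hc]
    rcases cross_main s i j ht hc with ⟨hn, hpp, hw⟩ | ⟨hpp, hn, hw⟩
    · rw [hw]; unfold ee
      rw [if_pos hpp, if_neg (not_lt.mpr hn.le)]; ring
    · rw [hw]; unfold ee
      rw [if_neg (not_lt.mpr hn.le), if_pos hpp]; ring
  · rw [if_neg hc, noncross_step s i j ht hc]; ring

end LaterCross

open LaterCross in
/-- For any red–blue pair of pegs in any solution, the total weight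
contribution of all their crossings other than the first is zero: after the
first crossing, the remaining crossings come in equal numbers of `+2` and
`-2` weight-change jumps, so their weight changes cancel. -/
theorem later_crossings_cancel (N L : ℕ) (s : PegSolution N L) (i j : Fin N)
    (h : ((Finset.range L).filter (fun t => CrossesAt s i j t)).Nonempty) :
    (∑ t ∈ ((Finset.range L).filter (fun t => CrossesAt s i j t)).erase
        (((Finset.range L).filter (fun t => CrossesAt s i j t)).min' h),
      (weight s (t + 1) - weight s t)) = 0 := by
  classical
  set F := (Finset.range L).filter (fun t => CrossesAt s i j t) with hF
  set m := F.min' h with hm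
  have hmF : m ∈ F := Finset.min'_mem F h
  have hmL : m < L := Finset.mem_range.mp (Finset.mem_filter.mp hmF).1
  have hmc : CrossesAt s i j m := (Finset.mem_filter.mp hmF).2
  have hd0 : ¬ 0 < dd s i j 0 := by
    have hb := s.init_blue i
    have hr := s.init_red j
    have hi : (i : ℤ) < N := by exact_mod_cast i.isLt
    have hj : (0 : ℤ) ≤ (j : ℤ) := by positivity
    unfold dd
    rw [hb, hr]
    omega
  have hdL : 0 < dd s i j L := by
    have hb := s.final_blue i
    have hr := s.final_red j
    unfold dd
    omega
  have htot : (∑ t ∈ F, (weight s (t + 1) - weight s t)) = 2 := by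
    rw [hF, Finset.sum_filter]
    rw [Finset.sum_congr rfl
      (fun t htt => step s i j (Finset.mem_range.mp htt)),
      Finset.sum_range_sub (ee s i j)]
    unfold ee
    rw [if_pos hdL, if_neg hd0]
    ring
  have hpre : ∀ u, u ≤ m → ee s i j u = -1 := by
    intro u
    induction u with
    | zero =>
      intro _
      unfold ee
      rw [if_neg hd0]
    | succ u ih =>
      intro hu
      have hum : u < m := by omega
      have hnc : ¬ CrossesAt s i j u := by
        intro hcu
        have huF : u ∈ F := by
          rw [hF]
          exact Finset.mem_filter.mpr ⟨Finset.mem_range.mpr (by omega), hcu⟩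
        have := Finset.min'_le F u huF
        omega
      rw [noncross_step s i j (by omega : u < L) hnc, ih (by omega)]
  have hem := hpre m le_rfl
  have hdm : ¬ 0 < dd s i j m := by
    intro hp
    unfold ee at hem
    rw [if_pos hp] at hem
    norm_num at hem
  have hwm : weight s (m + 1) - weight s m = 2 := by
    rcases cross_main s i j hmL hmc with ⟨_, _, hw⟩ | ⟨hp, _, _⟩
    · exact hw
    · exact absurd hp hdm
  have : (∑ t ∈ F.erase m, (weight s (t + 1) - weight s t)) + (weight s (m + 1) - weight s m) = 2 := by
    rw [Finset.sum_erase_add F _ hmF]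
    exact htot
  linarith
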